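/- The function x ↦ x·ln(x/sin x) is convex on the interval (0, π). -/

import Mathlib

open Real

private noncomputable def F : ℝ → ℝ := fun x => x * Real.log x - x * Real.log (Real.sin x)

private noncomputable def F1 : ℝ → ℝ := fun x =>
  Real.log x + 1 - (1 * Real.log (Real.sin x) + x * (Real.cos x / Real.sin x))

private noncomputable def F2 : ℝ → ℝ := fun x =>
  x⁻¹ - (1 * (Real.cos x / Real.sin x) +
    (1 * (Real.cos x / Real.sin x) +
      x * ((-Real.sin x * Real.sin x - Real.cos x * Real.cos x) / Real.sin x ^ 2)))

lemma sin_pos' {x : ℝ} (hx : x ∈ Set.Ioo 0 Real.pi) : 0 < Real.sin x :=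
  Real.sin_pos_of_pos_of_lt_pi hx.1 hx.2

lemma hasDerivF {x : ℝ} (hx : x ∈ Set.Ioo 0 Real.pi) : HasDerivAt F (F1 x) x := by
  have hx0 : 0 < x := hx.1
  have hs : 0 < Real.sin x := sin_pos' hx
  have h1 : HasDerivAt (fun x : ℝ => x * Real.log x) (Real.log x + 1) x :=
    Real.hasDerivAt_mul_log hx0.ne'
  have h2 : HasDerivAt (fun x : ℝ => Real.log (Real.sin x)) (Real.cos x / Real.sin x) x := by
    simpa using (Real.hasDerivAt_sin x).log hs.ne'
  have h3 : HasDerivAt (fun x : ℝ => x * Real.log (Real.sin x))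
      (1 * Real.log (Real.sin x) + x * (Real.cos x / Real.sin x)) x := by
    simpa [Pi.mul_def] using (hasDerivAt_id x).mul h2
  exact (by simpa [F1, Pi.sub_def] using h1.sub h3 :
    HasDerivAt (fun i => i * Real.log i - i * Real.log (Real.sin i)) (F1 x) x)

lemma hasDerivF1 {x : ℝ} (hx : x ∈ Set.Ioo 0 Real.pi) : HasDerivAt F1 (F2 x) x := by
  have hx0 : 0 < x := hx.1
  have hs : 0 < Real.sin x := sin_pos' hx
  have hlog : HasDerivAt Real.log x⁻¹ x := Real.hasDerivAt_log hx0.ne'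
  have h2 : HasDerivAt (fun x : ℝ => Real.log (Real.sin x)) (Real.cos x / Real.sin x) x := by
    simpa using (Real.hasDerivAt_sin x).log hs.ne'
  have hdiv : HasDerivAt (fun x : ℝ => Real.cos x / Real.sin x)
      ((-Real.sin x * Real.sin x - Real.cos x * Real.cos x) / Real.sin x ^ 2) x :=
    (Real.hasDerivAt_cos x).div (Real.hasDerivAt_sin x) hs.ne'
  have hprod : HasDerivAt (fun x : ℝ => x * (Real.cos x / Real.sin x))
      (1 * (Real.cos x / Real.sin x) +
        x * ((-Real.sin x * Real.sin x - Real.cos x * Real.cos x) / Real.sin x ^ 2)) x := by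
    simpa [Pi.mul_def] using (hasDerivAt_id x).mul hdiv
  exact ((hlog.add_const 1).sub ((h2.const_mul 1).add hprod))

lemma F2_nonneg {x : ℝ} (hx : x ∈ Set.Ioo 0 Real.pi) : 0 ≤ F2 x := by
  have hx0 : 0 < x := hx.1
  have hs : 0 < Real.sin x := sin_pos' hx
  have key : F2 x = (Real.sin x ^ 2 - 2 * x * Real.sin x * Real.cos x + x ^ 2) /
      (x * Real.sin x ^ 2) := by
    unfold F2
    field_simp
    linear_combination x ^ 2 * Real.sin_sq_add_cos_sq x
  rw [key]
  apply div_nonneg _ (by positivity)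
  nlinarith [sq_nonneg (x - Real.sin x * Real.cos x), Real.sin_sq_add_cos_sq x,
    sq_nonneg (Real.sin x ^ 2), sq_nonneg (Real.sin x)]

theorem stmt_3 :
    ConvexOn ℝ (Set.Ioo 0 Real.pi) (fun x : ℝ => x * Real.log (x / Real.sin x)) := by
  have hint : interior (Set.Ioo 0 Real.pi) = Set.Ioo 0 Real.pi := interior_Ioo
  have hdF : ∀ x ∈ Set.Ioo 0 Real.pi, deriv F x = F1 x := fun x hx => (hasDerivF hx).deriv
  have hopen : IsOpen (Set.Ioo 0 Real.pi) := isOpen_Ioo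
  have hconv : ConvexOn ℝ (Set.Ioo 0 Real.pi) F := by
    apply convexOn_of_deriv2_nonneg (convex_Ioo 0 Real.pi)
    · exact fun x hx => ((hasDerivF hx).differentiableAt).continuousAt.continuousWithinAt
    · rw [hint]
      exact fun x hx => ((hasDerivF hx).differentiableAt).differentiableWithinAt
    · rw [hint]
      intro x hx
      have heq : deriv F =ᶠ[nhds x] F1 :=
        Filter.eventuallyEq_of_mem (hopen.mem_nhds hx) hdF
      exact (((hasDerivF1 hx).differentiableAt).congr_of_eventuallyEq
        heq).differentiableWithinAt
    · rw [hint]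
      intro x hx
      have heq : deriv F =ᶠ[nhds x] F1 :=
        Filter.eventuallyEq_of_mem (hopen.mem_nhds hx) hdF
      have : deriv^[2] F x = deriv (deriv F) x := by
        simp [Function.iterate_succ]
      rw [this, heq.deriv_eq, (hasDerivF1 hx).deriv]
      exact F2_nonneg hx
  have heq : ∀ x ∈ Set.Ioo 0 Real.pi, x * Real.log (x / Real.sin x) = F x := by
    intro x hx
    have hx0 : 0 < x := hx.1
    have hs : 0 < Real.sin x := sin_pos' hx
    rw [Real.log_div hx0.ne' hs.ne']
    unfold F; ring
  refine ⟨hconv.1, fun x hx y hy a b ha hb hab => ?_⟩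
  have hmem := hconv.1 hx hy ha hb hab
  simp only [smul_eq_mul] at hmem ⊢
  rw [heq _ hx, heq _ hy, heq _ hmem]
  simpa using hconv.2 hx hy ha hb hab
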